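/- arXiv:1402.6025 — 2 statements merged into one kernel-verified Lean document; each statement's English description precedes it below -/
import Mathlib

section
/- For any s ≥ 0, μ > 0, ν > 0, the equation 2ζ² log((ζ − μ)/ν) = s has a unique solution ζ in the interval [μ + ν, ∞). -/
open Real Set

theorem stmt_5 (μ ν s : ℝ) (hμ : 0 < μ) (hν : 0 < ν) (hs : 0 ≤ s) :
    ∃! ζ : ℝ, ζ ∈ Ici (μ + ν) ∧ 2 * ζ^2 * Real.log ((ζ - μ)/ν) = s := by
  set f : ℝ → ℝ := fun ζ => 2 * ζ^2 * Real.log ((ζ - μ)/ν) with hf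
  set a : ℝ := μ + ν with ha
  -- strict monotonicity on Ici a
  have hmono : ∀ x y : ℝ, a ≤ x → x < y → f x < f y := by
    intro x y hx hxy
    have hx0 : 0 < x := lt_of_lt_of_le (by positivity) hx
    have hxμ : 0 < x - μ := by simp only [ha] at hx; linarith
    have hyμ : 0 < y - μ := by linarith
    have hLx : 0 ≤ Real.log ((x - μ)/ν) := by
      apply Real.log_nonneg
      rw [le_div_iff₀ hν]
      simp only [ha] at hx; linarith
    have hlt : Real.log ((x - μ)/ν) < Real.log ((y - μ)/ν) := by
      apply Real.log_lt_log (by positivity)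
      gcongr
    have hsq : x^2 < y^2 := by nlinarith
    simp only [hf]
    nlinarith
  -- existence
  set M : ℝ := max (μ + ν * Real.exp s) 1 with hM
  have hexp : 1 ≤ Real.exp s := Real.one_le_exp hs
  have haM : a ≤ M := le_trans (by nlinarith) (le_max_left _ _)
  have hcont : ContinuousOn f (Icc a M) := by
    apply ContinuousOn.mul (by fun_prop)
    apply ContinuousOn.log (by fun_prop)
    intro x hx
    have : μ < x := by
      have := hx.1; simp only [ha] at this; linarith
    exact ne_of_gt (div_pos (by linarith) hν)
  have hfa : f a = 0 := by
    simp only [hf, ha]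
    have : (μ + ν - μ)/ν = 1 := by field_simp; ring
    rw [this, Real.log_one, mul_zero]
  have hfM : s ≤ f M := by
    have hM1 : 1 ≤ M := le_max_right _ _
    have hL : s ≤ Real.log ((M - μ)/ν) := by
      have h1 : Real.exp s ≤ (M - μ)/ν := by
        rw [le_div_iff₀ hν]
        have := le_max_left (μ + ν * Real.exp s) 1
        simp only [← hM] at this; linarith
      calc s = Real.log (Real.exp s) := (Real.log_exp s).symm
        _ ≤ _ := Real.log_le_log (Real.exp_pos s) h1
    have h2 : (1:ℝ) ≤ M^2 := by nlinarith
    simp only [hf]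
    nlinarith [mul_le_mul_of_nonneg_left hL (show (0:ℝ) ≤ 2*M^2 by positivity)]
  have hs' : s ∈ Icc (f a) (f M) := ⟨by rw [hfa]; exact hs, hfM⟩
  obtain ⟨ζ, hζmem, hζeq⟩ := intermediate_value_Icc haM hcont hs'
  refine ⟨ζ, ⟨hζmem.1, hζeq⟩, ?_⟩
  rintro y ⟨hy, hyeq⟩
  by_contra hne
  rcases lt_or_gt_of_ne hne with h | h
  · exact absurd (hyeq.trans hζeq.symm) (ne_of_lt (hmono y ζ hy h))
  · exact absurd (hζeq.trans hyeq.symm) (ne_of_lt (hmono ζ y hζmem.1 h))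
end

section
/- For μ > 0, b > 0, p ≥ 1/2 and ε ≤ 0, the power-law stored energy W(γ) = (μ/(2b))[(1 + (b/p)(|γ|² − ε))^p − 1] is a convex function on ℝ². -/
open Real Set

lemma aux_hu (a ε : ℝ) (r : ℝ) :
    HasDerivAt (fun r : ℝ => 1 + a * (r^2 - ε)) (a * (2 * r)) r := by
  simpa using (((hasDerivAt_pow 2 r).sub_const ε).const_mul a).const_add 1

lemma aux_hasDerivAt (a c p ε : ℝ) (ha : 0 < a) (hε : ε ≤ 0) (r : ℝ) :
    HasDerivAt (fun r : ℝ => c * ((1 + a * (r^2 - ε)) ^ p - 1))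
      (c * (2 * a * p) * (r * (1 + a * (r^2 - ε)) ^ (p - 1))) r := by
  have hpos : (0:ℝ) < 1 + a * (r^2 - ε) := by nlinarith [sq_nonneg r]
  have h2 := (aux_hu a ε r).rpow_const (p := p) (Or.inl (ne_of_gt hpos))
  have h3 := (h2.sub_const 1).const_mul c
  exact h3.congr_deriv (by ring)

lemma aux_deriv2 (a c p ε : ℝ) (ha : 0 < a) (hε : ε ≤ 0) (r : ℝ) :
    HasDerivAt (fun r : ℝ => c * (2 * a * p) * (r * (1 + a * (r^2 - ε)) ^ (p - 1)))
      (c * (2 * a * p) * (1 * (1 + a * (r^2 - ε)) ^ (p - 1)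
        + r * (a * (2 * r) * (p - 1) * (1 + a * (r^2 - ε)) ^ (p - 1 - 1)))) r := by
  have hpos : (0:ℝ) < 1 + a * (r^2 - ε) := by nlinarith [sq_nonneg r]
  have h2 := (aux_hu a ε r).rpow_const (p := p - 1) (Or.inl (ne_of_gt hpos))
  have h3 := ((hasDerivAt_id r).mul h2).const_mul (c * (2 * a * p))
  exact h3

lemma aux_convex (a c p ε : ℝ) (ha : 0 < a) (hc : 0 < c) (hp : (1:ℝ)/2 ≤ p)
    (hε : ε ≤ 0) :
    ConvexOn ℝ Set.univ (fun r : ℝ => c * ((1 + a * (r^2 - ε)) ^ p - 1)) := by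
  apply convexOn_of_hasDerivWithinAt2_nonneg (f' := fun r =>
      c * (2 * a * p) * (r * (1 + a * (r^2 - ε)) ^ (p - 1)))
    (f'' := fun r => c * (2 * a * p) * (1 * (1 + a * (r^2 - ε)) ^ (p - 1)
        + r * (a * (2 * r) * (p - 1) * (1 + a * (r^2 - ε)) ^ (p - 1 - 1)))) convex_univ
  · exact fun r _ => ((aux_hasDerivAt a c p ε ha hε r).continuousAt).continuousWithinAt
  · exact fun r _ => (aux_hasDerivAt a c p ε ha hε r).hasDerivWithinAt
  · exact fun r _ => (aux_deriv2 a c p ε ha hε r).hasDerivWithinAt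
  · intro r _
    have hpos : (0:ℝ) < 1 + a * (r^2 - ε) := by nlinarith [sq_nonneg r]
    have hq : (0:ℝ) < (1 + a * (r^2 - ε)) ^ (p - 1 - 1) := Real.rpow_pos_of_pos hpos _
    have hr1 : (1 + a * (r^2 - ε)) ^ (p - 1)
        = (1 + a * (r^2 - ε)) ^ (p - 1 - 1) * (1 + a * (r^2 - ε)) := by
      rw [← Real.rpow_add_one (ne_of_gt hpos)]
      norm_num
    rw [hr1]
    have hp0 : (0:ℝ) < p := by linarith
    have key : 0 ≤ (1 + a * (r^2 - ε)) + 2 * a * r^2 * (p - 1) := by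
      have h1 : 0 ≤ a * r^2 * (2*p - 1) :=
        mul_nonneg (mul_nonneg ha.le (sq_nonneg r)) (by linarith)
      have h2 : 0 ≤ a * (-ε) := mul_nonneg ha.le (by linarith)
      nlinarith
    have expand : c * (2 * a * p) * (1 * ((1 + a * (r^2 - ε)) ^ (p - 1 - 1) * (1 + a * (r^2 - ε)))
        + r * (a * (2 * r) * (p - 1) * (1 + a * (r^2 - ε)) ^ (p - 1 - 1)))
        = c * (2 * a * p) * (1 + a * (r^2 - ε)) ^ (p - 1 - 1)
          * ((1 + a * (r^2 - ε)) + 2 * a * r^2 * (p - 1)) := by ring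
    rw [expand]
    positivity

lemma aux_mono (a c p ε : ℝ) (ha : 0 < a) (hc : 0 < c) (hp : (1:ℝ)/2 ≤ p)
    (hε : ε ≤ 0) :
    MonotoneOn (fun r : ℝ => c * ((1 + a * (r^2 - ε)) ^ p - 1)) (Set.Ici 0) := by
  apply monotoneOn_of_deriv_nonneg (convex_Ici 0)
  · exact fun r _ => ((aux_hasDerivAt a c p ε ha hε r).continuousAt).continuousWithinAt
  · exact fun r _ => (aux_hasDerivAt a c p ε ha hε r).differentiableAt.differentiableWithinAt
  · intro r hr
    rw [interior_Ici] at hr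
    rw [(aux_hasDerivAt a c p ε ha hε r).deriv]
    have hpos : (0:ℝ) < 1 + a * (r^2 - ε) := by nlinarith [sq_nonneg r]
    have hq : (0:ℝ) < (1 + a * (r^2 - ε)) ^ (p - 1) := Real.rpow_pos_of_pos hpos _
    have hp0 : (0:ℝ) < p := by linarith
    have hr0 : 0 < r := hr
    positivity

theorem stmt_11 (μ b p ε : ℝ) (hμ : 0 < μ) (hb : 0 < b) (hp : (1:ℝ)/2 ≤ p)
    (hε : ε ≤ 0) :
    ConvexOn ℝ Set.univ
      (fun γ : EuclideanSpace ℝ (Fin 2) =>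
        (μ/(2*b)) * ((1 + (b/p) * (‖γ‖^2 - ε)) ^ p - 1)) := by
  have hp0 : (0:ℝ) < p := by linarith
  have ha : 0 < b / p := div_pos hb hp0
  have hc : 0 < μ / (2*b) := div_pos hμ (by linarith)
  have himg : (fun γ : EuclideanSpace ℝ (Fin 2) => ‖γ‖) '' Set.univ = Set.Ici 0 := by
    ext t
    constructor
    · rintro ⟨γ, -, rfl⟩; exact norm_nonneg γ
    · intro ht
      exact ⟨EuclideanSpace.single 0 t, Set.mem_univ _, by
        simp [EuclideanSpace.norm_single, Real.norm_eq_abs, abs_of_nonneg (Set.mem_Ici.mp ht)]⟩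
  have hφ : ConvexOn ℝ ((fun γ : EuclideanSpace ℝ (Fin 2) => ‖γ‖) '' Set.univ)
      (fun r : ℝ => (μ/(2*b)) * ((1 + (b/p) * (r^2 - ε)) ^ p - 1)) := by
    rw [himg]
    exact (aux_convex (b/p) (μ/(2*b)) p ε ha hc hp hε).subset (Set.subset_univ _) (convex_Ici 0)
  have hmono : MonotoneOn (fun r : ℝ => (μ/(2*b)) * ((1 + (b/p) * (r^2 - ε)) ^ p - 1))
      ((fun γ : EuclideanSpace ℝ (Fin 2) => ‖γ‖) '' Set.univ) := by
    rw [himg]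
    exact aux_mono (b/p) (μ/(2*b)) p ε ha hc hp hε
  exact hφ.comp (convexOn_univ_norm) hmono
end
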